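/- Let T_t = Σ_{i=0}^n 𝔗_i tⁱ (with 𝔗₀=T) be an order n deformation of a relative Rota-Baxter operator T:V→𝔤 on a Lie-Yamaguti algebra 𝔤 with respect to (V;ρ,μ). If there exists 𝔗_{n+1}:V→𝔤 such that the pair (Ob₁ᵀ, Ob₂ᵀ) defined by Ob₁ᵀ(v₁,v₂)=Σ_{i+j=n+1, i,j≥1}([𝔗ᵢv₁,𝔗ⱼv₂]−𝔗ᵢ(ρ(𝔗ⱼv₁)v₂−ρ(𝔗ⱼv₂)v₁)) and Ob₂ᵀ(v₁,v₂,v₃)=Σ_{i+j+k=n+1, 0≤i,j,k≤n}(⟦𝔗ᵢv₁,𝔗ⱼv₂,𝔗ₖv₃⟧−𝔗ᵢ(D(𝔗ⱼv₁,𝔗ₖv₂)v₃+μ(𝔗ⱼv₂,𝔗ₖv₃)v₁−μ(𝔗ⱼv₁,𝔗ₖv₃)v₂)) equals −δᵀ(𝔗_{n+1}), then T_t + 𝔗_{n+1}t^{n+1} is an order n+1 deformation of T; conversely, if T_t extends to an order n+1 deformation via some 𝔗_{n+1}, then (Ob₁ᵀ, Ob₂ᵀ) = −δᵀ(𝔗_{n+1}).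 -/

import Mathlib

open scoped BigOperators

variable (K : Type*) [Field K]

section Defs
variable {g V : Type*} [AddCommGroup g] [Module K g] [AddCommGroup V] [Module K V]

/-- Bilinearity of a two-argument map. -/
def IsBilin (f : g → g → V) : Prop :=
  (∀ a b c, f (a + b) c = f a c + f b c) ∧
  (∀ (s : K) a c, f (s • a) c = s • f a c) ∧
  (∀ a b c, f a (b + c) = f a b + f a c) ∧
  (∀ (s : K) a b, f a (s • b) = s • f a b)

/-- Trilinearity of a three-argument map. -/
def IsTrilin (f : g → g → g → V) : Prop :=
  (∀ a b c d, f (a + b) c d = f a c d + f b c d) ∧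
  (∀ (s : K) a c d, f (s • a) c d = s • f a c d) ∧
  (∀ a b c d, f a (b + c) d = f a b d + f a c d) ∧
  (∀ (s : K) a b d, f a (s • b) d = s • f a b d) ∧
  (∀ a b c d, f a b (c + d) = f a b c + f a b d) ∧
  (∀ (s : K) a b c, f a b (s • c) = s • f a b c)

/-- Linearity of a map. -/
def IsLin (f : g → V) : Prop :=
  (∀ a b, f (a + b) = f a + f b) ∧ (∀ (s : K) a, f (s • a) = s • f a)

/-- `(g, br, tr)` is a Lie-Yamaguti algebra. -/
def IsLY (br : g → g → g) (tr : g → g → g → g) : Prop :=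
  IsBilin K br ∧ IsTrilin K tr ∧
  (∀ x y, br x y = - br y x) ∧
  (∀ x y z, tr x y z = - tr y x z) ∧
  (∀ x y z, br (br x y) z + br (br y z) x + br (br z x) y
      + tr x y z + tr y z x + tr z x y = 0) ∧
  (∀ x y z w, tr (br x y) z w + tr (br y z) x w + tr (br z x) y w = 0) ∧
  (∀ x y z w, tr x y (br z w) = br (tr x y z) w + br z (tr x y w)) ∧
  (∀ x y z w t, tr x y (tr z w t) =
      tr (tr x y z) w t + tr z (tr x y w) t + tr z w (tr x y t))

/-- The operator `D(x,y) = μ(y,x) − μ(x,y) + [ρ(x),ρ(y)] − ρ([x,y])`. -/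
def Dmap (br : g → g → g) (ρ : g → Module.End K V) (μ : g → g → Module.End K V)
    (x y : g) : Module.End K V :=
  μ y x - μ x y + (ρ x * ρ y - ρ y * ρ x) - ρ (br x y)

/-- `(V; ρ, μ)` is a representation of the Lie-Yamaguti algebra `(g, br, tr)`. -/
def IsRep (br : g → g → g) (tr : g → g → g → g)
    (ρ : g → Module.End K V) (μ : g → g → Module.End K V) : Prop :=
  IsLin K ρ ∧ IsBilin K μ ∧
  (∀ x y z, μ (br x y) z - μ x z * ρ y + μ y z * ρ x = 0) ∧
  (∀ x y z, μ x (br y z) - ρ y * μ x z + ρ z * μ x y = 0) ∧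
  (∀ x y z, ρ (tr x y z) = Dmap K br ρ μ x y * ρ z - ρ z * Dmap K br ρ μ x y) ∧
  (∀ x y z w, μ z w * μ x y - μ y w * μ x z - μ x (tr y z w)
      + Dmap K br ρ μ y z * μ x w = 0) ∧
  (∀ x y z w, μ (tr x y z) w + μ z (tr x y w) =
      Dmap K br ρ μ x y * μ z w - μ z w * Dmap K br ρ μ x y)

/-- `T : V → g` is a relative Rota-Baxter operator. -/
def IsRRB (br : g → g → g) (tr : g → g → g → g)
    (ρ : g → Module.End K V) (μ : g → g → Module.End K V) (T : V →ₗ[K] g) : Prop :=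
  (∀ u v, br (T u) (T v) = T (ρ (T u) v - ρ (T v) u)) ∧
  (∀ u v w, tr (T u) (T v) (T w) =
      T (Dmap K br ρ μ (T u) (T v) w + μ (T v) (T w) u - μ (T u) (T w) v))

end Defs

section Nij
variable {h : Type*} [AddCommGroup h]

/-- `N` is a Nijenhuis operator on the Lie-Yamaguti algebra `(h, br, tr)`. -/
def IsNijenhuis (br : h → h → h) (tr : h → h → h → h) (N : h → h) : Prop :=
  (∀ x y, br (N x) (N y) = N (br (N x) y + br x (N y) - N (br x y))) ∧
  (∀ x y z, tr (N x) (N y) (N z) =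
      N (tr (N x) (N y) z + tr (N x) y (N z) + tr x (N y) (N z)
        - N (tr (N x) y z) - N (tr x (N y) z) - N (tr x y (N z))
        + N (N (tr x y z))))

end Nij

section Stmt19
variable {g V : Type*} [AddCommGroup g] [Module K g] [AddCommGroup V] [Module K V]

/-- `𝔗` (with `𝔗 0 = T`) is an order-`n` deformation of the relative Rota-Baxter
operator `T = 𝔗 0`. -/
def IsOrderDef (br : g → g → g) (tr : g → g → g → g)
    (ρ : g → Module.End K V) (μ : g → g → Module.End K V)
    (n : ℕ) (𝔗 : ℕ → V →ₗ[K] g) : Prop :=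
  ∀ s, s ≤ n →
    (∀ u v : V, ∑ p ∈ Finset.HasAntidiagonal.antidiagonal s,
        (br (𝔗 p.1 u) (𝔗 p.2 v) - 𝔗 p.1 (ρ (𝔗 p.2 u) v - ρ (𝔗 p.2 v) u)) = 0) ∧
    (∀ u v w : V, ∑ i ∈ Finset.range (s + 1), ∑ j ∈ Finset.range (s + 1 - i),
        (tr (𝔗 i u) (𝔗 j v) (𝔗 (s - i - j) w)
          - 𝔗 i (Dmap K br ρ μ (𝔗 j u) (𝔗 (s - i - j) v) w
              + μ (𝔗 j v) (𝔗 (s - i - j) w) u - μ (𝔗 j u) (𝔗 (s - i - j) w) v)) = 0)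

/-- The first component of the obstruction `Ob^T`. -/
def ObI (br : g → g → g) (ρ : g → Module.End K V)
    (𝔗 : ℕ → V →ₗ[K] g) (n : ℕ) (u v : V) : g :=
  ∑ p ∈ (Finset.HasAntidiagonal.antidiagonal (n + 1)).filter (fun p => 1 ≤ p.1 ∧ 1 ≤ p.2),
    (br (𝔗 p.1 u) (𝔗 p.2 v) - 𝔗 p.1 (ρ (𝔗 p.2 u) v - ρ (𝔗 p.2 v) u))

/-- The second component of the obstruction `Ob^T`. -/
def ObII (br : g → g → g) (tr : g → g → g → g)
    (ρ : g → Module.End K V) (μ : g → g → Module.End K V)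
    (𝔗 : ℕ → V →ₗ[K] g) (n : ℕ) (u v w : V) : g :=
  ∑ i ∈ Finset.range (n + 2), ∑ j ∈ Finset.range (n + 2 - i),
    if i ≤ n ∧ j ≤ n ∧ n + 1 - i - j ≤ n then
      (tr (𝔗 i u) (𝔗 j v) (𝔗 (n + 1 - i - j) w)
        - 𝔗 i (Dmap K br ρ μ (𝔗 j u) (𝔗 (n + 1 - i - j) v) w
            + μ (𝔗 j v) (𝔗 (n + 1 - i - j) w) u - μ (𝔗 j u) (𝔗 (n + 1 - i - j) w) v))
    else 0

/-- The first component of the coboundary `δᵀ` of a 1-cochain. -/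
def deltaI (br : g → g → g) (ρ : g → Module.End K V)
    (T f : V →ₗ[K] g) (u v : V) : g :=
  br (T u) (f v) - br (T v) (f u) + T (ρ (f v) u - ρ (f u) v)
    - f (ρ (T u) v - ρ (T v) u)

/-- The second component of the coboundary `δᵀ` of a 1-cochain. -/
def deltaII (br : g → g → g) (tr : g → g → g → g)
    (ρ : g → Module.End K V) (μ : g → g → Module.End K V)
    (T f : V →ₗ[K] g) (u v w : V) : g :=
  tr (T u) (T v) (f w) + tr (f u) (T v) (T w) - tr (f v) (T u) (T w)
    - f (Dmap K br ρ μ (T u) (T v) w + μ (T v) (T w) u - μ (T u) (T w) v)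
    - T (Dmap K br ρ μ (f u) (T v) w - Dmap K br ρ μ (f v) (T u) w
        + μ (T v) (f w) u - μ (T u) (f w) v - μ (f u) (T w) v + μ (f v) (T w) u)

lemma split_bilin (n : ℕ) {M : Type*} [AddCommGroup M] (f : ℕ × ℕ → M) :
    ∑ p ∈ Finset.HasAntidiagonal.antidiagonal (n + 1), f p =
    (∑ p ∈ (Finset.HasAntidiagonal.antidiagonal (n + 1)).filter (fun p => 1 ≤ p.1 ∧ 1 ≤ p.2), f p)
      + (f (0, n + 1) + f (n + 1, 0)) := by
  rw [← Finset.sum_filter_add_sum_filter_not (Finset.HasAntidiagonal.antidiagonal (n + 1))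
      (fun p => 1 ≤ p.1 ∧ 1 ≤ p.2) f]
  congr 1
  have h : (Finset.HasAntidiagonal.antidiagonal (n + 1)).filter (fun p => ¬(1 ≤ p.1 ∧ 1 ≤ p.2))
      = {((0 : ℕ), n + 1), (n + 1, 0)} := by
    ext ⟨a, b⟩
    simp only [Finset.mem_filter, Finset.HasAntidiagonal.mem_antidiagonal, Finset.mem_insert,
      Finset.mem_singleton, Prod.mk.injEq]
    omega
  rw [h, Finset.sum_insert (by simp), Finset.sum_singleton]

lemma split_trilin (n : ℕ) {M : Type*} [AddCommGroup M] (f : ℕ → ℕ → M) :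
    ∑ i ∈ Finset.range (n + 2), ∑ j ∈ Finset.range (n + 2 - i), f i j =
    (∑ i ∈ Finset.range (n + 2), ∑ j ∈ Finset.range (n + 2 - i),
        if i ≤ n ∧ j ≤ n ∧ n + 1 - i - j ≤ n then f i j else 0)
      + (f 0 0 + f 0 (n + 1) + f (n + 1) 0) := by
  have h1 : ∑ i ∈ Finset.range (n + 2), ∑ j ∈ Finset.range (n + 2 - i), f i j
      = ∑ i ∈ Finset.range (n + 2), ∑ j ∈ Finset.range (n + 2 - i),
          ((if i ≤ n ∧ j ≤ n ∧ n + 1 - i - j ≤ n then f i j else 0)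
            + (if i ≤ n ∧ j ≤ n ∧ n + 1 - i - j ≤ n then 0 else f i j)) := by
    apply Finset.sum_congr rfl; intro i _
    apply Finset.sum_congr rfl; intro j _
    split <;> simp
  rw [h1]
  simp only [Finset.sum_add_distrib]
  congr 1
  rw [Finset.sum_range_succ]
  have htop : ∑ j ∈ Finset.range (n + 2 - (n + 1)),
      (if n + 1 ≤ n ∧ j ≤ n ∧ n + 1 - (n + 1) - j ≤ n then 0 else f (n + 1) j)
      = f (n + 1) 0 := by
    rw [show (n + 2 - (n + 1)) = 1 by omega, Finset.sum_range_one, if_neg (by omega)]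
  rw [htop]
  have hrest : ∑ i ∈ Finset.range (n + 1), ∑ j ∈ Finset.range (n + 2 - i),
      (if i ≤ n ∧ j ≤ n ∧ n + 1 - i - j ≤ n then 0 else f i j)
      = f 0 0 + f 0 (n + 1) := by
    rw [Finset.sum_eq_single 0]
    · rw [show (n + 2 - 0) = n + 2 by omega, Finset.sum_range_succ, if_neg (by omega),
        Finset.sum_eq_single 0]
      · rw [if_neg (by omega)]
      · intro j hj hne
        rw [if_pos (by simp only [Finset.mem_range] at hj; omega)]
      · intro h; exact absurd (Finset.mem_range.mpr (by omega)) h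
    · intro i hi hne
      apply Finset.sum_eq_zero
      intro j hj
      simp only [Finset.mem_range] at hi hj
      rw [if_pos (by omega)]
    · intro h; exact absurd (Finset.mem_range.mpr (by omega)) h
  rw [hrest]

theorem stmt19 (br : g → g → g) (tr : g → g → g → g)
    (ρ : g → Module.End K V) (μ : g → g → Module.End K V)
    (hLY : IsLY K br tr) (hrep : IsRep K br tr ρ μ)
    (T : V →ₗ[K] g) (hT : IsRRB K br tr ρ μ T)
    (n : ℕ) (𝔗 : ℕ → V →ₗ[K] g) (h0 : 𝔗 0 = T)
    (hdef : IsOrderDef K br tr ρ μ n 𝔗)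
    (X : V →ₗ[K] g) :
    ((∀ u v : V, ObI K br ρ 𝔗 n u v = - deltaI K br ρ T X u v) ∧
     (∀ u v w : V, ObII K br tr ρ μ 𝔗 n u v w = - deltaII K br tr ρ μ T X u v w)) ↔
    IsOrderDef K br tr ρ μ (n + 1) (fun i => if i = n + 1 then X else 𝔗 i) := by
  set 𝔗' : ℕ → V →ₗ[K] g := fun i => if i = n + 1 then X else 𝔗 i with h𝔗'
  have hne : ∀ i, i ≤ n → 𝔗' i = 𝔗 i := fun i hi => if_neg (by omega)
  have htop : 𝔗' (n + 1) = X := if_pos rfl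
  have hnegρ : ∀ a : g, ρ (-a) = - ρ a := by
    intro a
    have := hrep.1.2 (-1 : K) a
    simpa using this
  have hDskew : ∀ x y : g, Dmap K br ρ μ x y = - Dmap K br ρ μ y x := by
    intro x y
    rw [Dmap, Dmap, hLY.2.2.1 x y, hnegρ]
    abel
  have eqI : ∀ u v : V, (∑ p ∈ Finset.HasAntidiagonal.antidiagonal (n + 1),
      (br (𝔗' p.1 u) (𝔗' p.2 v) - 𝔗' p.1 (ρ (𝔗' p.2 u) v - ρ (𝔗' p.2 v) u)))
      = ObI K br ρ 𝔗 n u v + deltaI K br ρ T X u v := by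
    intro u v
    rw [split_bilin]
    congr 1
    · rw [ObI]
      apply Finset.sum_congr rfl
      intro p hp
      simp only [Finset.mem_filter, Finset.HasAntidiagonal.mem_antidiagonal] at hp
      rw [hne p.1 (by omega), hne p.2 (by omega)]
    · simp only [htop, hne 0 (Nat.zero_le n), h0]
      rw [deltaI, hLY.2.2.1 (X u) (T v)]
      simp only [map_sub]
      abel
  have eqII : ∀ u v w : V, (∑ i ∈ Finset.range (n + 2), ∑ j ∈ Finset.range (n + 2 - i),
      (tr (𝔗' i u) (𝔗' j v) (𝔗' (n + 1 - i - j) w)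
        - 𝔗' i (Dmap K br ρ μ (𝔗' j u) (𝔗' (n + 1 - i - j) v) w
            + μ (𝔗' j v) (𝔗' (n + 1 - i - j) w) u - μ (𝔗' j u) (𝔗' (n + 1 - i - j) w) v)))
      = ObII K br tr ρ μ 𝔗 n u v w + deltaII K br tr ρ μ T X u v w := by
    intro u v w
    rw [split_trilin]
    congr 1
    · rw [ObII]
      apply Finset.sum_congr rfl
      intro i _
      apply Finset.sum_congr rfl
      intro j _
      by_cases hP : i ≤ n ∧ j ≤ n ∧ n + 1 - i - j ≤ n
      · rw [if_pos hP, if_pos hP, hne i hP.1, hne j hP.2.1, hne _ hP.2.2]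
      · rw [if_neg hP, if_neg hP]
    · simp only [Nat.sub_zero, Nat.sub_self, htop, hne 0 (Nat.zero_le n), h0]
      rw [deltaII, hLY.2.2.2.1 (T u) (X v) (T w), hDskew (X v) (T u)]
      simp only [LinearMap.neg_apply, map_add, map_sub, map_neg]
      abel
  constructor
  · rintro ⟨h1, h2⟩ s hs
    rcases Nat.lt_or_ge s (n + 1) with hlt | hge
    · have hs' : s ≤ n := by omega
      obtain ⟨hb, ht⟩ := hdef s hs'
      constructor
      · intro u v
        rw [← hb u v]
        apply Finset.sum_congr rfl
        intro p hp
        simp only [Finset.HasAntidiagonal.mem_antidiagonal] at hp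
        rw [hne p.1 (by omega), hne p.2 (by omega)]
      · intro u v w
        rw [← ht u v w]
        apply Finset.sum_congr rfl
        intro i hi
        apply Finset.sum_congr rfl
        intro j hj
        simp only [Finset.mem_range] at hi hj
        rw [hne i (by omega), hne j (by omega), hne (s - i - j) (by omega)]
    · have hseq : s = n + 1 := by omega
      subst hseq
      constructor
      · intro u v
        rw [eqI u v, h1 u v]
        abel
      · intro u v w
        simp only [show n + 1 + 1 = n + 2 from rfl]
        rw [eqII u v w, h2 u v w]
        abel
  · intro hd
    obtain ⟨hb, ht⟩ := hd (n + 1) le_rfl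
    constructor
    · intro u v
      have h := hb u v
      rw [eqI u v] at h
      exact eq_neg_of_add_eq_zero_left h
    · intro u v w
      have h := ht u v w
      simp only [show n + 1 + 1 = n + 2 from rfl] at h
      rw [eqII u v w] at h
      exact eq_neg_of_add_eq_zero_left h

end Stmt19
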